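/- For a ∈ ℝⁿ, let G_a : ℝⁿ → ℝ be G_a(z) = e^{−|z−a|²}, viewed as an element of L^p(ℝⁿ) for 1 ≤ p < ∞. Then the map a ↦ G_a from ℝⁿ to L^p(ℝⁿ) is Fréchet differentiable at every a, with derivative h ↦ (z ↦ 2 e^{−|z−a|²} ⟨z−a, h⟩), and this derivative is an injective linear map from ℝⁿ to L^p(ℝⁿ) for every a ∈ ℝⁿ. -/

import Mathlib

open MeasureTheory Filter

-- auxiliary scalar inequality: 2 + 4*s ≤ 6 * exp (s/2) for s ≥ 0
lemma aux_exp_quad {s : ℝ} (hs : 0 ≤ s) : 2 + 4 * s ≤ 6 * Real.exp (s / 2) := by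
  have h1 : s / 4 + 1 ≤ Real.exp (s / 4) := Real.add_one_le_exp _
  have h2 : Real.exp (s / 4) * Real.exp (s / 4) = Real.exp (s / 2) := by
    rw [← Real.exp_add]; ring_nf
  nlinarith [Real.exp_pos (s / 4), sq_nonneg (s - 4)]

-- auxiliary: decay transfer
lemma aux_decay {u r : ℝ} (hu : 0 ≤ u) (hr : 0 ≤ r) (h : r - 1 ≤ u) :
    Real.exp (-u ^ 2 / 2) ≤ Real.exp (1 / 2) * Real.exp (-r ^ 2 / 4) := by
  rw [← Real.exp_add]
  apply Real.exp_le_exp.2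
  rcases le_or_gt r 1 with h1 | h1
  · nlinarith
  · nlinarith [sq_nonneg (r - 2), sq_nonneg (u - r + 1)]

-- pointwise second-order Taylor bound for the Gaussian
lemma aux_ptwise {V : Type*} [NormedAddCommGroup V] [InnerProductSpace ℝ V]
    (w h : V) (hh : ‖h‖ ≤ 1) :
    |Real.exp (-‖w - h‖ ^ 2) - Real.exp (-‖w‖ ^ 2) -
      2 * Real.exp (-‖w‖ ^ 2) * (inner ℝ w h : ℝ)| ≤
    6 * Real.exp (1 / 2) * Real.exp (-‖w‖ ^ 2 / 4) * ‖h‖ ^ 2 := by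
  set A : ℝ := ‖w‖ ^ 2 with hA
  set B : ℝ := (inner ℝ w h : ℝ) with hB
  set Cc : ℝ := ‖h‖ ^ 2 with hCc
  set Q : ℝ → ℝ := fun t => A - 2 * B * t + Cc * t ^ 2 with hQdef
  have hQ : ∀ t : ℝ, ‖w - t • h‖ ^ 2 = Q t := by
    intro t
    have := norm_sub_sq_real w (t • h)
    rw [real_inner_smul_right] at this
    rw [this, norm_smul]
    simp only [Real.norm_eq_abs, mul_pow, sq_abs, hQdef]
    ring
  set G : ℝ → ℝ := fun t => Real.exp (-Q t) with hGdef
  set G1 : ℝ → ℝ := fun t => (2 * B - 2 * Cc * t) * Real.exp (-Q t) with hG1def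
  set G2 : ℝ → ℝ := fun t =>
    (-(2 * Cc)) * Real.exp (-Q t) + (2 * B - 2 * Cc * t) ^ 2 * Real.exp (-Q t) with hG2def
  have hQd : ∀ t : ℝ, HasDerivAt Q (2 * Cc * t - 2 * B) t := by
    intro t
    have h1 : HasDerivAt (fun y : ℝ => 2 * B * y) (2 * B * 1) t :=
      (hasDerivAt_id t).const_mul (2 * B)
    have h2 : HasDerivAt (fun y : ℝ => Cc * y ^ 2) (Cc * (2 * t ^ 1)) t := by
      simpa using (hasDerivAt_pow 2 t).const_mul Cc
    have := ((hasDerivAt_const t A).sub h1).add h2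
    exact this.congr_deriv (by ring)
  have hGd : ∀ t : ℝ, HasDerivAt G (G1 t) t := by
    intro t
    have := ((hQd t).neg).exp
    exact this.congr_deriv (by simp only [hG1def, Pi.neg_apply]; ring)
  have hG1d : ∀ t : ℝ, HasDerivAt G1 (G2 t) t := by
    intro t
    have hlin : HasDerivAt (fun y : ℝ => 2 * B - 2 * Cc * y) (0 - 2 * Cc * 1) t :=
      (hasDerivAt_const t (2 * B)).sub ((hasDerivAt_id t).const_mul (2 * Cc))
    have := hlin.mul (hGd t)
    exact this.congr_deriv (by simp only [hG2def, hG1def]; ring)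
  set M : ℝ := 6 * Real.exp (1 / 2) * Real.exp (-‖w‖ ^ 2 / 4) * ‖h‖ ^ 2 with hM
  have hMnn : 0 ≤ M := by positivity
  have hbound : ∀ t ∈ Set.Icc (0 : ℝ) 1, ‖G2 t‖ ≤ M := by
    intro t ht
    set u : ℝ := ‖w - t • h‖ with hu
    have hu0 : 0 ≤ u := norm_nonneg _
    have hQt : Q t = u ^ 2 := (hQ t).symm
    have hBC : 2 * B - 2 * Cc * t = 2 * (inner ℝ (w - t • h) h : ℝ) := by
      rw [inner_sub_left, real_inner_smul_left, hB, hCc, ← real_inner_self_eq_norm_sq]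
      ring
    have hcs : |(inner ℝ (w - t • h) h : ℝ)| ≤ u * ‖h‖ := abs_real_inner_le_norm _ _
    have hsq : (2 * B - 2 * Cc * t) ^ 2 ≤ 4 * u ^ 2 * ‖h‖ ^ 2 := by
      rw [hBC]
      nlinarith [sq_abs ((inner ℝ (w - t • h) h : ℝ)),
        abs_nonneg ((inner ℝ (w - t • h) h : ℝ)), mul_nonneg hu0 (norm_nonneg h)]
    have hstep1 : ‖G2 t‖ ≤ (2 * ‖h‖ ^ 2 + 4 * u ^ 2 * ‖h‖ ^ 2) * Real.exp (-u ^ 2) := by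
      simp only [hG2def, hQt, Real.norm_eq_abs]
      have he : (0:ℝ) < Real.exp (-u ^ 2) := Real.exp_pos _
      calc |(-(2 * Cc)) * Real.exp (-u ^ 2) + (2 * B - 2 * Cc * t) ^ 2 * Real.exp (-u ^ 2)|
          ≤ |(-(2 * Cc)) * Real.exp (-u ^ 2)| + |(2 * B - 2 * Cc * t) ^ 2 * Real.exp (-u ^ 2)| :=
            abs_add_le _ _
        _ = 2 * Cc * Real.exp (-u ^ 2) + (2 * B - 2 * Cc * t) ^ 2 * Real.exp (-u ^ 2) := by
            rw [abs_mul, abs_mul, abs_of_pos he, abs_neg,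
              abs_of_nonneg (by positivity : (0:ℝ) ≤ 2 * Cc), abs_of_nonneg (sq_nonneg _)]
        _ ≤ (2 * ‖h‖ ^ 2 + 4 * u ^ 2 * ‖h‖ ^ 2) * Real.exp (-u ^ 2) := by
            rw [hCc] at hsq ⊢; nlinarith
    have hstep2 : (2 * ‖h‖ ^ 2 + 4 * u ^ 2 * ‖h‖ ^ 2) * Real.exp (-u ^ 2)
        ≤ 6 * ‖h‖ ^ 2 * Real.exp (-u ^ 2 / 2) := by
      have hA2 := aux_exp_quad (sq_nonneg u)
      have hee : Real.exp (u ^ 2 / 2) * Real.exp (-u ^ 2) = Real.exp (-u ^ 2 / 2) := by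
        rw [← Real.exp_add]; ring_nf
      have he : (0:ℝ) < Real.exp (-u ^ 2) := Real.exp_pos _
      have key : (2 + 4 * u ^ 2) * Real.exp (-u ^ 2) ≤ 6 * Real.exp (-u ^ 2 / 2) := by
        calc (2 + 4 * u ^ 2) * Real.exp (-u ^ 2)
            ≤ 6 * Real.exp (u ^ 2 / 2) * Real.exp (-u ^ 2) := by nlinarith
          _ = 6 * Real.exp (-u ^ 2 / 2) := by rw [mul_assoc, hee]
      nlinarith [sq_nonneg ‖h‖, Real.exp_pos (-u ^ 2 / 2)]
    have hth : ‖t • h‖ ≤ 1 := by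
      rw [norm_smul, Real.norm_eq_abs, abs_of_nonneg ht.1]
      calc t * ‖h‖ ≤ 1 * 1 := by
            apply mul_le_mul ht.2 hh (norm_nonneg _) zero_le_one
        _ = 1 := by norm_num
    have hlow : ‖w‖ - 1 ≤ u := by
      have := norm_sub_norm_le w (t • h)
      linarith
    have hstep3 : Real.exp (-u ^ 2 / 2) ≤ Real.exp (1 / 2) * Real.exp (-‖w‖ ^ 2 / 4) :=
      aux_decay hu0 (norm_nonneg w) hlow
    calc ‖G2 t‖ ≤ (2 * ‖h‖ ^ 2 + 4 * u ^ 2 * ‖h‖ ^ 2) * Real.exp (-u ^ 2) := hstep1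
      _ ≤ 6 * ‖h‖ ^ 2 * Real.exp (-u ^ 2 / 2) := hstep2
      _ ≤ 6 * ‖h‖ ^ 2 * (Real.exp (1 / 2) * Real.exp (-‖w‖ ^ 2 / 4)) := by
          apply mul_le_mul_of_nonneg_left hstep3 (by positivity)
      _ = M := by rw [hM]; ring
  have hconv : Convex ℝ (Set.Icc (0:ℝ) 1) := convex_Icc 0 1
  have h01 : (0:ℝ) ∈ Set.Icc (0:ℝ) 1 := by constructor <;> norm_num
  have h11 : (1:ℝ) ∈ Set.Icc (0:ℝ) 1 := by constructor <;> norm_num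
  -- first mean value: ‖G1 t - G1 0‖ ≤ M for t ∈ [0,1]
  have hmv1 : ∀ t ∈ Set.Icc (0:ℝ) 1, ‖G1 t - G1 0‖ ≤ M := by
    intro t ht
    have := hconv.norm_image_sub_le_of_norm_hasDerivWithin_le
      (f := G1) (f' := G2)
      (fun x hx => (hG1d x).hasDerivWithinAt) hbound h01 ht
    have ht1 : ‖t - 0‖ ≤ 1 := by
      rw [sub_zero, Real.norm_eq_abs, abs_of_nonneg ht.1]; exact ht.2
    calc ‖G1 t - G1 0‖ ≤ M * ‖t - 0‖ := this
      _ ≤ M * 1 := mul_le_mul_of_nonneg_left ht1 hMnn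
      _ = M := mul_one M
  -- second mean value on F t = G t - t * G1 0
  set F : ℝ → ℝ := fun t => G t - t * G1 0 with hFdef
  have hFd : ∀ t : ℝ, HasDerivAt F (G1 t - G1 0) t := by
    intro t
    have h1 : HasDerivAt (fun y : ℝ => y * G1 0) (1 * G1 0) t :=
      (hasDerivAt_id t).mul_const (G1 0)
    have := (hGd t).sub h1
    exact this.congr_deriv (by ring)
  have hmv2 : ‖F 1 - F 0‖ ≤ M * ‖(1:ℝ) - 0‖ :=
    hconv.norm_image_sub_le_of_norm_hasDerivWithin_le
      (f := F) (f' := fun t => G1 t - G1 0)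
      (fun x hx => (hFd x).hasDerivWithinAt) hmv1 h01 h11
  have hF10 : F 1 - F 0 = Real.exp (-‖w - h‖ ^ 2) - Real.exp (-‖w‖ ^ 2) -
      2 * Real.exp (-‖w‖ ^ 2) * (inner ℝ w h : ℝ) := by
    have hQ1 : Q 1 = ‖w - h‖ ^ 2 := by
      rw [← hQ 1, one_smul]
    have hQ0 : Q 0 = ‖w‖ ^ 2 := by simp [hQdef, hA]
    simp only [hFdef, hGdef, hG1def, hQ1, hQ0]
    ring
  rw [hF10] at hmv2
  simpa using hmv2

-- integrability of a Gaussian on Euclidean space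
lemma aux_gauss_integrable (n : ℕ) {b : ℝ} (hb : 0 < b) (a : EuclideanSpace ℝ (Fin n)) :
    Integrable (fun z : EuclideanSpace ℝ (Fin n) => Real.exp (-b * ‖z - a‖ ^ 2)) := by
  have h0 : Integrable (fun v : EuclideanSpace ℝ (Fin n) => Real.exp (-b * ‖v‖ ^ 2)) := by
    refine ((GaussianFourier.integrable_cexp_neg_mul_sq_norm_add_of_euclideanSpace
      (b := (b : ℂ)) (by simpa using hb) 0 (0 : EuclideanSpace ℝ (Fin n))).norm).congr
      (Eventually.of_forall fun v => ?_)
    simp only [Complex.norm_exp]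
    have : (-(b:ℂ) * (‖v‖:ℂ) ^ 2 +
        0 * ((inner ℝ (0 : EuclideanSpace ℝ (Fin n)) v : ℝ) : ℂ)) = ((-b * ‖v‖ ^ 2 : ℝ) : ℂ) := by
      push_cast; ring
    rw [this, Complex.ofReal_re]
  exact h0.comp_sub_right a

theorem stmt16 (n : ℕ) (p : ℝ) (hp : 1 ≤ p) (a : EuclideanSpace ℝ (Fin n)) :
    Tendsto (fun h : EuclideanSpace ℝ (Fin n) =>
        (∫ z : EuclideanSpace ℝ (Fin n),
          |Real.exp (-‖z - (a + h)‖ ^ 2) - Real.exp (-‖z - a‖ ^ 2) -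
            2 * Real.exp (-‖z - a‖ ^ 2) * (inner ℝ (z - a) h : ℝ)| ^ p) ^ (1 / p) / ‖h‖)
      (nhdsWithin 0 {0}ᶜ) (nhds 0) ∧
    ∀ h : EuclideanSpace ℝ (Fin n),
      (∀ᵐ z : EuclideanSpace ℝ (Fin n),
        2 * Real.exp (-‖z - a‖ ^ 2) * (inner ℝ (z - a) h : ℝ) = 0) → h = 0 := by
  have hp0 : (0:ℝ) < p := lt_of_lt_of_le one_pos hp
  have hpne : p ≠ 0 := ne_of_gt hp0
  set K : ℝ := 6 * Real.exp (1 / 2) with hK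
  have hKpos : 0 < K := by positivity
  set I : ℝ := ∫ z : EuclideanSpace ℝ (Fin n), Real.exp (-(p / 4) * ‖z - a‖ ^ 2) with hI
  have hInn : 0 ≤ I := integral_nonneg fun z => (Real.exp_pos _).le
  have hIint : Integrable
      (fun z : EuclideanSpace ℝ (Fin n) => Real.exp (-(p / 4) * ‖z - a‖ ^ 2)) :=
    aux_gauss_integrable n (by positivity) a
  constructor
  · -- Fréchet differentiability (the quotient tends to 0)
    set φ : EuclideanSpace ℝ (Fin n) → ℝ := fun h =>
      (∫ z : EuclideanSpace ℝ (Fin n),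
          |Real.exp (-‖z - (a + h)‖ ^ 2) - Real.exp (-‖z - a‖ ^ 2) -
            2 * Real.exp (-‖z - a‖ ^ 2) * (inner ℝ (z - a) h : ℝ)| ^ p) ^ (1 / p) / ‖h‖ with hφ
    have hφnn : ∀ h, 0 ≤ φ h := by
      intro h
      apply div_nonneg _ (norm_nonneg _)
      apply Real.rpow_nonneg
      exact integral_nonneg fun z => Real.rpow_nonneg (abs_nonneg _) p
    have hsmall : ∀ᶠ h : EuclideanSpace ℝ (Fin n) in nhdsWithin 0 {0}ᶜ,
        ‖h‖ ≤ 1 ∧ h ≠ 0 := by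
      have h1 : ∀ᶠ h : EuclideanSpace ℝ (Fin n) in nhds 0, ‖h‖ ≤ 1 := by
        filter_upwards [Metric.closedBall_mem_nhds (0 : EuclideanSpace ℝ (Fin n)) one_pos]
          with x hx
        simpa [Metric.mem_closedBall, dist_zero_right] using hx
      have h2 : ∀ᶠ h : EuclideanSpace ℝ (Fin n) in nhdsWithin 0 {0}ᶜ, h ≠ 0 := by
        filter_upwards [self_mem_nhdsWithin] with x hx
        simpa using hx
      exact (h1.filter_mono nhdsWithin_le_nhds).and h2
    have hmain : ∀ᶠ h : EuclideanSpace ℝ (Fin n) in nhdsWithin 0 {0}ᶜ,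
        φ h ≤ K * I ^ (1 / p) * ‖h‖ := by
      filter_upwards [hsmall] with h hh
      obtain ⟨hh1, hh0⟩ := hh
      have hhpos : (0:ℝ) < ‖h‖ := norm_pos_iff.2 hh0
      -- pointwise bound after rewriting z - (a + h) = (z - a) - h
      have hpt : ∀ z : EuclideanSpace ℝ (Fin n),
          |Real.exp (-‖z - (a + h)‖ ^ 2) - Real.exp (-‖z - a‖ ^ 2) -
            2 * Real.exp (-‖z - a‖ ^ 2) * (inner ℝ (z - a) h : ℝ)| ^ p ≤
          (K * ‖h‖ ^ 2) ^ p * Real.exp (-(p / 4) * ‖z - a‖ ^ 2) := by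
        intro z
        have hz : z - (a + h) = (z - a) - h := by abel
        rw [hz]
        have hb := aux_ptwise (z - a) h hh1
        have h1 : |Real.exp (-‖z - a - h‖ ^ 2) - Real.exp (-‖z - a‖ ^ 2) -
              2 * Real.exp (-‖z - a‖ ^ 2) * (inner ℝ (z - a) h : ℝ)| ^ p ≤
            (K * Real.exp (-‖z - a‖ ^ 2 / 4) * ‖h‖ ^ 2) ^ p := by
          apply Real.rpow_le_rpow (abs_nonneg _) _ hp0.le
          simpa [hK] using hb
        refine h1.trans_eq ?_
        have e1 : K * Real.exp (-‖z - a‖ ^ 2 / 4) * ‖h‖ ^ 2 =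
            (K * ‖h‖ ^ 2) * Real.exp (-‖z - a‖ ^ 2 / 4) := by ring
        rw [e1, Real.mul_rpow (by positivity) (Real.exp_pos _).le]
        congr 1
        rw [Real.rpow_def_of_pos (Real.exp_pos _), Real.log_exp]
        congr 1
        ring
      have hKey : (∫ z : EuclideanSpace ℝ (Fin n),
          |Real.exp (-‖z - (a + h)‖ ^ 2) - Real.exp (-‖z - a‖ ^ 2) -
            2 * Real.exp (-‖z - a‖ ^ 2) * (inner ℝ (z - a) h : ℝ)| ^ p)
          ≤ (K * ‖h‖ ^ 2) ^ p * I := by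
        rw [hI, ← integral_const_mul]
        apply integral_mono_of_nonneg
        · exact Eventually.of_forall fun z => Real.rpow_nonneg (abs_nonneg _) p
        · exact hIint.const_mul _
        · exact Eventually.of_forall hpt
      have hnum : (∫ z : EuclideanSpace ℝ (Fin n),
          |Real.exp (-‖z - (a + h)‖ ^ 2) - Real.exp (-‖z - a‖ ^ 2) -
            2 * Real.exp (-‖z - a‖ ^ 2) * (inner ℝ (z - a) h : ℝ)| ^ p) ^ (1 / p)
          ≤ (K * ‖h‖ ^ 2) * I ^ (1 / p) := by
        have h2 : ((K * ‖h‖ ^ 2) ^ p * I) ^ (1 / p) = (K * ‖h‖ ^ 2) * I ^ (1 / p) := by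
          rw [Real.mul_rpow (Real.rpow_nonneg (by positivity) p) hInn]
          congr 1
          rw [← Real.rpow_mul (by positivity), mul_one_div_cancel hpne, Real.rpow_one]
        rw [← h2]
        apply Real.rpow_le_rpow _ hKey (by positivity)
        exact integral_nonneg fun z => Real.rpow_nonneg (abs_nonneg _) p
      rw [hφ]
      rw [div_le_iff₀ hhpos]
      calc (∫ z : EuclideanSpace ℝ (Fin n),
          |Real.exp (-‖z - (a + h)‖ ^ 2) - Real.exp (-‖z - a‖ ^ 2) -
            2 * Real.exp (-‖z - a‖ ^ 2) * (inner ℝ (z - a) h : ℝ)| ^ p) ^ (1 / p)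
          ≤ (K * ‖h‖ ^ 2) * I ^ (1 / p) := hnum
        _ = K * I ^ (1 / p) * ‖h‖ * ‖h‖ := by ring
    have hlim : Tendsto (fun h : EuclideanSpace ℝ (Fin n) => K * I ^ (1 / p) * ‖h‖)
        (nhdsWithin 0 {0}ᶜ) (nhds 0) := by
      have h1 : Tendsto (fun h : EuclideanSpace ℝ (Fin n) => ‖h‖) (nhds 0) (nhds 0) := by
        simpa using tendsto_norm_zero
      have h2 := h1.const_mul (K * I ^ (1 / p))
      simp only [mul_zero] at h2
      exact h2.mono_left nhdsWithin_le_nhds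
    exact squeeze_zero' (Eventually.of_forall hφnn) hmain hlim
  · -- injectivity of the derivative
    intro h hae
    have hae2 : ∀ᵐ z : EuclideanSpace ℝ (Fin n),
        (inner ℝ (z - a) h : ℝ) = 0 := by
      filter_upwards [hae] with z hz
      have hexp : (0:ℝ) < 2 * Real.exp (-‖z - a‖ ^ 2) := by positivity
      have := mul_eq_zero.1 hz
      rcases this with h1 | h1
      · exact absurd h1 (ne_of_gt hexp)
      · exact h1
    have hcont : Continuous fun z : EuclideanSpace ℝ (Fin n) => (inner ℝ (z - a) h : ℝ) :=
      (continuous_id.sub continuous_const).inner continuous_const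
    have heq : (fun z : EuclideanSpace ℝ (Fin n) => (inner ℝ (z - a) h : ℝ)) =
        fun _ => (0 : ℝ) := by
      rw [← Continuous.ae_eq_iff_eq volume hcont continuous_const]
      exact hae2
    have := congrFun heq (a + h)
    simp only [add_sub_cancel_left] at this
    exact inner_self_eq_zero.1 this
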